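/- For every finite simple graph G, α_2(G) ≥ Σ_{v ∈ V(G)} min{1, 1/(ζ(v) + 1/3)}, where α_2(G) is the maximum size of a vertex set S with Δ(G[S]) ≤ 2. -/

import Mathlib

open SimpleGraph Finset

/-- The minimum degree of a subgraph `H` of `G`: the infimum over vertices of `H`
of the number of neighbors in `H`. -/
noncomputable def subMinDeg {V : Type*} (G : SimpleGraph V) (H : G.Subgraph) : ℕ :=
  sInf ((fun v => (H.neighborSet v).ncard) '' H.verts)

/-- The degenerate degree `ζ(v)`: the maximum of `δ(H)` over all subgraphs `H` of `G`
containing `v`. -/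
noncomputable def zeta {V : Type*} (G : SimpleGraph V) (v : V) : ℕ :=
  sSup {n | ∃ H : G.Subgraph, v ∈ H.verts ∧ subMinDeg G H = n}

/-- A vertex `u` is cheap if `ζ(u) = deg_G(u)` and `ζ(u) ≤ ζ(w)` for every `w ∈ N[u]`. -/
def Cheap {V : Type*} (G : SimpleGraph V) (u : V) : Prop :=
  zeta G u = (G.neighborSet u).ncard ∧ ∀ w, G.Adj u w → zeta G u ≤ zeta G w

noncomputable def fw {V : Type*} (G : SimpleGraph V) (v : V) : ℝ :=
  min 1 ((1 : ℝ) / (zeta G v + 1/3))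

lemma fw_nonneg {V : Type*} (G : SimpleGraph V) (v : V) : 0 ≤ fw G v := by
  apply le_min
  · norm_num
  · positivity

lemma fw_le_one {V : Type*} (G : SimpleGraph V) (v : V) : fw G v ≤ 1 := min_le_left _ _

lemma fw_le {V : Type*} (G : SimpleGraph V) (x : V) (d : ℕ) (h : d ≤ zeta G x) :
    fw G x ≤ min 1 (3 / (3 * (d : ℝ) + 1)) := by
  apply le_min (fw_le_one G x)
  have hz : (d : ℝ) ≤ zeta G x := Nat.cast_le.mpr h
  have h1 : (0:ℝ) < (zeta G x : ℝ) + 1/3 := by positivity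
  have h2 : (0:ℝ) < 3 * (d : ℝ) + 1 := by positivity
  calc fw G x ≤ (1 : ℝ) / (zeta G x + 1/3) := min_le_right _ _
    _ ≤ 3 / (3 * (d : ℝ) + 1) := by
        rw [div_le_div_iff₀ h1 h2]
        linarith

lemma le_zeta {V : Type*} [Fintype V] [DecidableEq V] (G : SimpleGraph V) [DecidableRel G.Adj]
    (A : Finset V) (u x : V) (hu : u ∈ A) (hx : x ∈ A)
    (hmin : ∀ a ∈ A, (A.filter (G.Adj u)).card ≤ (A.filter (G.Adj a)).card) :
    (A.filter (G.Adj u)).card ≤ zeta G x := by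
  set H : G.Subgraph :=
    { verts := ↑A
      Adj := fun a b => a ∈ A ∧ b ∈ A ∧ G.Adj a b
      adj_sub := fun h => h.2.2
      edge_vert := fun h => h.1
      symm := ⟨fun a b h => ⟨h.2.1, h.1, h.2.2.symm⟩⟩ } with hH
  have hnb : ∀ a ∈ A, (H.neighborSet a).ncard = (A.filter (G.Adj a)).card := by
    intro a ha
    have hset : H.neighborSet a = ↑(A.filter (G.Adj a)) := by
      ext b
      simp [SimpleGraph.Subgraph.neighborSet, hH, ha]
    rw [hset, Set.ncard_coe_finset]
  -- subMinDeg of H is at least the min degree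
  have himg : subMinDeg G H ∈ ((fun v => (H.neighborSet v).ncard) '' H.verts) := by
    apply Nat.sInf_mem
    exact ⟨(H.neighborSet x).ncard, ⟨x, hx, rfl⟩⟩
  obtain ⟨a, ha, heq⟩ := himg
  have haA : a ∈ A := ha
  have h1 : (A.filter (G.Adj u)).card ≤ subMinDeg G H := by
    simp only [← heq]
    rw [hnb a haA]; exact hmin a haA
  -- zeta is at least subMinDeg of H
  have hbdd : BddAbove {n | ∃ H' : G.Subgraph, x ∈ H'.verts ∧ subMinDeg G H' = n} := by
    refine ⟨Fintype.card V, ?_⟩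
    rintro n ⟨H', hxH', rfl⟩
    have h3 : subMinDeg G H' ≤ (H'.neighborSet x).ncard :=
      Nat.sInf_le ⟨x, hxH', rfl⟩
    have h4 : (H'.neighborSet x).ncard ≤ Fintype.card V := by
      have := Set.ncard_le_ncard (Set.subset_univ (H'.neighborSet x)) (Set.toFinite _)
      simpa [Set.ncard_univ, Nat.card_eq_fintype_card] using this
    exact le_trans h3 h4
  have h2 : subMinDeg G H ≤ zeta G x :=
    le_csSup hbdd ⟨H, hx, rfl⟩
  exact le_trans h1 h2

lemma numeric (d ju c1 c2 : ℕ) (hju : ju ≤ 2) (hc : c1 + c2 = min d (2 - ju)) (t : ℝ)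
    (ht : t = min 1 (3 / (3 * (d : ℝ) + 1))) :
    t * ((3 - (ju : ℝ)) / 3) + ((d - min d (2 - ju) : ℕ) : ℝ) * t
      + (c2 : ℝ) * (t / 3) + (c1 : ℝ) * (t / 3) ≤ 1 := by
  have hkd : min d (2 - ju) ≤ d := min_le_left _ _
  have ht0 : 0 ≤ t := by
    rw [ht]; apply le_min <;> positivity
  have hcast : ((d - min d (2 - ju) : ℕ) : ℝ) = (d : ℝ) - ((min d (2 - ju) : ℕ) : ℝ) :=
    Nat.cast_sub hkd
  have hsum : (c1 : ℝ) + (c2 : ℝ) = ((min d (2 - ju) : ℕ) : ℝ) := by exact_mod_cast hc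
  rcases le_or_gt d (2 - ju) with hcase | hcase
  · -- k = d, so d - k = 0
    have hk : min d (2 - ju) = d := min_eq_left hcase
    have hd2 : d ≤ 2 := le_trans hcase (by omega)
    rw [hk] at hsum
    simp only [hk, Nat.sub_self, Nat.cast_zero, zero_mul, add_zero, zero_add]
    rw [ht]
    interval_cases ju <;> interval_cases d <;>
      · norm_num [min_def] at hsum ⊢ <;> nlinarith [hsum]
  · -- k = 2 - ju, d ≥ 1
    have hk : min d (2 - ju) = 2 - ju := min_eq_right (le_of_lt hcase)
    have hd1 : 1 ≤ d := by omega
    have hpos : (0:ℝ) < 3 * (d : ℝ) + 1 := by positivity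
    have hdr : (1:ℝ) ≤ (d:ℝ) := by exact_mod_cast hd1
    have htval : t = 3 / (3 * (d : ℝ) + 1) := by
      rw [ht, min_eq_right]
      rw [div_le_one hpos]
      linarith
    have hkcast : ((min d (2 - ju) : ℕ) : ℝ) = 2 - (ju : ℝ) := by
      rw [hk]; exact Nat.cast_sub hju
    have hjur : (ju : ℝ) ≤ 2 := by exact_mod_cast hju
    rw [hkcast] at hsum
    rw [htval, hcast, hkcast]
    have hcc : (c2:ℝ) * (3 / (3 * (d:ℝ) + 1) / 3) + (c1:ℝ) * (3 / (3 * (d:ℝ) + 1) / 3)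
        = (2 - (ju:ℝ)) * (3 / (3 * (d:ℝ) + 1) / 3) := by rw [← hsum]; ring
    rw [add_assoc, hcc]
    have heq : 3 / (3 * (d:ℝ) + 1) * ((3 - (ju:ℝ)) / 3)
        + ((d:ℝ) - (2 - (ju:ℝ))) * (3 / (3 * (d:ℝ) + 1))
        + (2 - (ju:ℝ)) * (3 / (3 * (d:ℝ) + 1) / 3)
        = (3 * (d:ℝ) + (ju:ℝ) - 1) / (3 * (d:ℝ) + 1) := by
      field_simp
      ring
    rw [heq, div_le_one hpos]
    linarith

lemma main_ind {V : Type*} [Fintype V] [DecidableEq V] (G : SimpleGraph V) [DecidableRel G.Adj] :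
    ∀ (n : ℕ) (A : Finset V), A.card = n → ∀ j : V → ℕ, (∀ x ∈ A, j x ≤ 2) →
    ∃ s : Finset V, s ⊆ A ∧ (∀ v ∈ s, (s.filter (G.Adj v)).card + j v ≤ 2) ∧
      ∑ x ∈ A, fw G x * (3 - (j x : ℝ)) / 3 ≤ s.card := by
  intro n
  induction n using Nat.strong_induction_on with
  | _ n ih =>
    intro A hAcard j hj
    rcases A.eq_empty_or_nonempty with rfl | hA
    · exact ⟨∅, by simp, by simp, by simp⟩
    obtain ⟨u, hu, hmin⟩ := A.exists_min_image (fun a => (A.filter (G.Adj a)).card) hA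
    set NA := A.filter (G.Adj u) with hNAdef
    set d := NA.card with hddef
    have hzeta : ∀ x ∈ A, fw G x ≤ min 1 (3 / (3 * (d:ℝ) + 1)) := fun x hx =>
      fw_le G x d (le_zeta G A u x hu hx hmin)
    set t := min 1 (3 / (3 * (d:ℝ) + 1)) with htdef
    have ht0 : (0:ℝ) ≤ t := le_min (by norm_num) (by positivity)
    have hju2 : j u ≤ 2 := hj u hu
    set k := min d (2 - j u) with hkdef
    obtain ⟨K, hKNA, hKcard⟩ := NA.exists_subset_card_eq (n := k) (min_le_left _ _)
    set K1 := K.filter (fun x => j x ≤ 1) with hK1def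
    have hK1K : K1 ⊆ K := filter_subset _ _
    set D := NA \ K1 with hDdef
    have hNAsub : NA ⊆ A := filter_subset _ _
    have hK1NA : K1 ⊆ NA := hK1K.trans hKNA
    have hNAne : ∀ x ∈ NA, x ≠ u := by
      intro x hx
      have hadj : G.Adj u x := (mem_filter.mp hx).2
      exact fun h => G.irrefl (h ▸ hadj)
    set A' := (A.erase u) \ D with hA'def
    have hA'subA : A' ⊆ A := (sdiff_subset).trans (erase_subset _ _)
    have huA' : u ∉ A' := fun h => (mem_erase.mp (mem_sdiff.mp h).1).1 rfl
    have hK1A' : K1 ⊆ A' := by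
      intro x hx
      have hxNA : x ∈ NA := hK1NA hx
      rw [hA'def, mem_sdiff, mem_erase]
      refine ⟨⟨hNAne x hxNA, hNAsub hxNA⟩, ?_⟩
      rw [hDdef, mem_sdiff]
      exact fun h => h.2 hx
    have hcardlt : A'.card < n := by
      have h1 : A'.card ≤ (A.erase u).card := card_le_card sdiff_subset
      have h2 : (A.erase u).card < A.card := card_erase_lt_of_mem hu
      omega
    set j' : V → ℕ := fun x => if x ∈ K1 then j x + 1 else j x with hj'def
    have hj'le : ∀ x ∈ A', j' x ≤ 2 := by
      intro x hx
      by_cases hxK1 : x ∈ K1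
      · have := (mem_filter.mp hxK1).2
        simp only [hj'def, if_pos hxK1]
        omega
      · simp only [hj'def, if_neg hxK1]
        exact hj x (hA'subA hx)
    obtain ⟨s', hs'A', hs'val, hs'sum⟩ := ih A'.card hcardlt A' rfl j' hj'le
    have hus' : u ∉ s' := fun h => huA' (hs'A' h)
    refine ⟨insert u s', ?_, ?_, ?_⟩
    · exact insert_subset hu (hs'A'.trans hA'subA)
    · -- validity
      intro v hv
      rcases mem_insert.mp hv with rfl | hvs'
      · -- v = u
        have hfe : (insert v s').filter (G.Adj v) = s'.filter (G.Adj v) := by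
          rw [filter_insert, if_neg (G.irrefl)]
        have hsubK1 : s'.filter (G.Adj v) ⊆ K1 := by
          intro x hx
          obtain ⟨hxs', hadj⟩ := mem_filter.mp hx
          have hxA' := hs'A' hxs'
          have hxNA : x ∈ NA := mem_filter.mpr ⟨hA'subA hxA', hadj⟩
          have hxnD : x ∉ D := (mem_sdiff.mp hxA').2
          by_contra hxK1
          exact hxnD (mem_sdiff.mpr ⟨hxNA, hxK1⟩)
        have h1 : (s'.filter (G.Adj v)).card ≤ K1.card := card_le_card hsubK1
        have h2 : K1.card ≤ k := hKcard ▸ card_le_card hK1K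
        have h3 : k ≤ 2 - j v := min_le_right _ _
        rw [hfe]
        omega
      · -- v ∈ s'
        have hvA' := hs'A' hvs'
        have hval := hs'val v hvs'
        rw [filter_insert]
        by_cases hadj : G.Adj v u
        · have hvK1 : v ∈ K1 := by
            have hvNA : v ∈ NA := mem_filter.mpr ⟨hA'subA hvA', hadj.symm⟩
            have hvnD : v ∉ D := (mem_sdiff.mp hvA').2
            by_contra hvK1
            exact hvnD (mem_sdiff.mpr ⟨hvNA, hvK1⟩)
          rw [if_pos hadj]
          have hunf : u ∉ s'.filter (G.Adj v) := fun h => hus' (mem_filter.mp h).1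
          rw [card_insert_of_notMem hunf]
          simp only [hj'def, if_pos hvK1] at hval
          omega
        · rw [if_neg hadj]
          have hvK1 : v ∉ K1 := by
            intro h
            exact hadj ((mem_filter.mp (hK1NA h)).2).symm
          simp only [hj'def, if_neg hvK1] at hval
          exact hval
    · -- sum bound
      have hcardins : ((insert u s').card : ℝ) = (s'.card : ℝ) + 1 := by
        rw [card_insert_of_notMem hus']; push_cast; ring
      rw [hcardins]
      set F : V → ℝ := fun x => fw G x * (3 - (j x : ℝ)) / 3 with hFdef
      have hDerase : D ⊆ A.erase u := by
        intro x hx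
        have hxNA : x ∈ NA := (mem_sdiff.mp hx).1
        exact mem_erase.mpr ⟨hNAne x hxNA, hNAsub hxNA⟩
      have e1 : ∑ x ∈ A.erase u, F x + F u = ∑ x ∈ A, F x := sum_erase_add A F hu
      have e2 : ∑ x ∈ A', F x + ∑ x ∈ D, F x = ∑ x ∈ A.erase u, F x :=
        sum_sdiff hDerase
      -- K \ K1 inside D
      have hKK1D : K \ K1 ⊆ D := by
        intro x hx
        obtain ⟨hxK, hxK1⟩ := mem_sdiff.mp hx
        exact mem_sdiff.mpr ⟨hKNA hxK, hxK1⟩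
      have e4 : ∑ x ∈ D \ (K \ K1), F x + ∑ x ∈ K \ K1, F x = ∑ x ∈ D, F x :=
        sum_sdiff hKK1D
      have hDKK : D \ (K \ K1) = NA \ K := by
        ext x
        simp only [hDdef, mem_sdiff]
        constructor
        · rintro ⟨⟨hxNA, hxK1⟩, h2⟩
          exact ⟨hxNA, fun hxK => h2 ⟨hxK, hxK1⟩⟩
        · rintro ⟨hxNA, hxK⟩
          exact ⟨⟨hxNA, fun h => hxK (hK1K h)⟩, fun h => hxK h.1⟩
      -- relate IH sum to F-sum
      have e3 : ∑ x ∈ A', fw G x * (3 - (j' x : ℝ)) / 3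
          = ∑ x ∈ A', F x - ∑ x ∈ K1, fw G x / 3 := by
        have p1 : ∀ x ∈ A', fw G x * (3 - (j' x : ℝ)) / 3
            = F x - (if x ∈ K1 then fw G x / 3 else 0) := by
          intro x hx
          by_cases hxK1 : x ∈ K1
          · simp only [hj'def, if_pos hxK1, hFdef]
            push_cast
            ring
          · simp only [hj'def, if_neg hxK1, hFdef]
            ring
        rw [sum_congr rfl p1, sum_sub_distrib]
        congr 1
        rw [← sum_subset hK1A' (fun x _ hxn => if_neg hxn)]
        exact sum_congr rfl (fun x hx => if_pos hx)
      -- bounds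
      have hFle : ∀ x ∈ A, F x ≤ t := by
        intro x hx
        have h3 : (3 - (j x : ℝ)) ≤ 3 := by
          have : (0:ℝ) ≤ (j x : ℝ) := Nat.cast_nonneg _
          linarith
        have h4 := mul_le_mul_of_nonneg_left h3 (fw_nonneg G x)
        have h5 := hzeta x hx
        simp only [hFdef]
        linarith
      have b1 : ∑ x ∈ NA \ K, F x ≤ ((NA \ K).card : ℝ) * t := by
        have := sum_le_card_nsmul (NA \ K) F t
          (fun x hx => hFle x (hNAsub (mem_sdiff.mp hx).1))
        simpa [nsmul_eq_mul] using this
      have b2 : ∑ x ∈ K \ K1, F x ≤ ((K \ K1).card : ℝ) * (t / 3) := by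
        have hb : ∀ x ∈ K \ K1, F x ≤ t / 3 := by
          intro x hx
          obtain ⟨hxK, hxK1⟩ := mem_sdiff.mp hx
          have hxA : x ∈ A := hNAsub (hKNA hxK)
          have hj2 : j x = 2 := by
            have h1 := hj x hxA
            have h2 : ¬ j x ≤ 1 := by
              intro h
              exact hxK1 (mem_filter.mpr ⟨hxK, h⟩)
            omega
          have h5 := hzeta x hxA
          simp only [hFdef, hj2]
          norm_num
          linarith
        have := sum_le_card_nsmul (K \ K1) F (t/3) hb
        simpa [nsmul_eq_mul] using this
      have b3 : ∑ x ∈ K1, fw G x / 3 ≤ (K1.card : ℝ) * (t / 3) := by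
        have hb : ∀ x ∈ K1, fw G x / 3 ≤ t / 3 := by
          intro x hx
          have h5 := hzeta x (hNAsub (hK1NA hx))
          linarith
        have := sum_le_card_nsmul K1 (fun x => fw G x / 3) (t/3) hb
        simpa [nsmul_eq_mul] using this
      have b4 : F u ≤ t * ((3 - (j u : ℝ)) / 3) := by
        have h3 : (0:ℝ) ≤ (3 - (j u : ℝ)) := by
          have : (j u : ℝ) ≤ 2 := by exact_mod_cast hju2
          linarith
        have h5 := hzeta u hu
        have h4 := mul_le_mul_of_nonneg_right h5 h3
        simp only [hFdef]
        linarith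
      -- cardinalities
      have c1 : (NA \ K).card = d - k := by
        rw [card_sdiff_of_subset hKNA, hKcard]
      have c2 : K1.card + (K \ K1).card = k := by
        have h1 : K1.card ≤ K.card := card_le_card hK1K
        have h2 : (K \ K1).card = K.card - K1.card := card_sdiff_of_subset hK1K
        omega
      have hnum := numeric d (j u) K1.card ((K \ K1).card) hju2 (by rw [← hkdef]; exact c2) t htdef
      rw [← hkdef, ← c1] at hnum
      -- assemble
      rw [hDKK] at e4
      rw [e3] at hs'sum
      linarith [b1, b2, b3, b4, e1, e2, e4, hs'sum, hnum]

theorem stmt_18 {V : Type*} [Fintype V] [DecidableEq V] (G : SimpleGraph V)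
    [DecidableRel G.Adj] :
    ∃ s : Finset V, (∀ v ∈ s, (s.filter (G.Adj v)).card ≤ 2) ∧
      (∑ v : V, min 1 ((1 : ℝ) / (zeta G v + 1/3))) ≤ s.card := by
  obtain ⟨s, hsub, hval, hsum⟩ :=
    main_ind G (Finset.univ.card) Finset.univ rfl (fun _ => 0) (by simp)
  refine ⟨s, fun v hv => by have := hval v hv; omega, ?_⟩
  have h2 : ∀ x ∈ (Finset.univ : Finset V),
      fw G x * (3 - (((fun _ : V => (0:ℕ)) x : ℕ) : ℝ)) / 3
        = min 1 ((1 : ℝ) / (zeta G x + 1/3)) := by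
    intro x _
    show fw G x * (3 - ((0:ℕ) : ℝ)) / 3 = _
    rw [fw]
    push_cast
    ring
  rw [sum_congr rfl h2] at hsum
  exact hsum
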